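/- The function F(ℓ, Y₁, X₂, Y₂) = (1/2)(1 + μ + 2ℓ + ℓ²)Y₁ + (1/2)(1 + μ − ℓ²)Y₂ − v X₂ is a first integral of the linear subsystem for (Y₁, X₂, Y₂) of the transformed normal variational equations with ω = 0, along the particular solution (ℓ(t), v(t)) with ℓ' = v, v' = δ − ℓ. -/

import Mathlib

/-- `F = (1/2)(1+μ+2ℓ+ℓ²)Y₁ + (1/2)(1+μ-ℓ²)Y₂ - vX₂` is a first integral of the
subsystem for `(Y₁, X₂, Y₂)` of the transformed normal variational equations (ω = 0),
along the particular solution `ℓ' = v`, `v' = δ - ℓ`. -/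
theorem first_integral_of_subsystem
    (μ δ : ℝ) (hμ : 0 < μ)
    (ℓ v : ℝ → ℝ)
    (hℓpos : ∀ t, 0 < ℓ t)
    (hℓ : ∀ t, HasDerivAt ℓ (v t) t)
    (hv : ∀ t, HasDerivAt v (δ - ℓ t) t)
    (Y₁ X₂ Y₂ : ℝ → ℝ)
    (hY₁ : ∀ t, HasDerivAt Y₁ (-(v t / ℓ t) * Y₁ t
        + (δ - ℓ t) * (ℓ t - 1) / (μ * ℓ t) * X₂ t + (v t / ℓ t) * Y₂ t) t)
    (hX₂ : ∀ t, HasDerivAt X₂ (Y₂ t) t)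
    (hY₂ : ∀ t, HasDerivAt Y₂ ((v t / ℓ t) * Y₁ t
        + (δ - ℓ t) * (ℓ t + 1) / (μ * ℓ t) * X₂ t - (v t / ℓ t) * Y₂ t) t) :
    ∀ t, HasDerivAt (fun s => (1/2) * (1 + μ + 2 * ℓ s + (ℓ s)^2) * Y₁ s
      + (1/2) * (1 + μ - (ℓ s)^2) * Y₂ s - v s * X₂ s) 0 t := by
  intro t
  have hl := hℓ t
  have hsq : HasDerivAt (fun s => (ℓ s)^2) (2 * ℓ t * v t) t := by
    simpa [mul_comm, mul_assoc, mul_left_comm] using hl.fun_pow 2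
  have A : HasDerivAt (fun s => (1/2) * (1 + μ + 2 * ℓ s + (ℓ s)^2))
      ((1/2) * (2 * v t + 2 * ℓ t * v t)) t := by
    have : HasDerivAt (fun s => 1 + μ + 2 * ℓ s + (ℓ s)^2)
        (2 * v t + 2 * ℓ t * v t) t := by
      simpa using (((hasDerivAt_const t (1 + μ)).fun_add (hl.const_mul 2)).fun_add hsq)
    simpa using this.const_mul (1/2 : ℝ)
  have B : HasDerivAt (fun s => (1/2) * (1 + μ - (ℓ s)^2))
      ((1/2) * (-(2 * ℓ t * v t))) t := by
    have : HasDerivAt (fun s => 1 + μ - (ℓ s)^2) (-(2 * ℓ t * v t)) t := by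
      simpa using ((hasDerivAt_const t (1 + μ)).fun_sub hsq)
    simpa using this.const_mul (1/2 : ℝ)
  have H := ((A.fun_mul (hY₁ t)).fun_add (B.fun_mul (hY₂ t))).fun_sub ((hv t).fun_mul (hX₂ t))
  refine H.congr_deriv ?_
  have h0 : ℓ t ≠ 0 := (hℓpos t).ne'
  have hμ0 : μ ≠ 0 := hμ.ne'
  field_simp
  ring
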